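/- Let α > −1/4, β = √(1+4α), ν > 0. Set λ(t) = t^{−1−ν} and τ(t) = ν^{−1}·t^{−ν} for t > 0, and let Λ(τ) = (ντ)^{1+1/ν}, so that Λ(τ(t)) = λ(t). Let w : (0,∞)×(0,∞) → ℝ be twice continuously differentiable, and define ε(t,r) = (λ(t)·r)^{−1}·w(τ(t), λ(t)·r). Then for all t, r > 0, with R = λ(t)·r: ∂_t²ε − ∂_r²ε − (2/r)·∂_rε + (α/r²)·ε − 5·λ(t)²·W_α(R)⁴·ε = λ(t)²·R^{−1}·( 𝒟²w + (Λ'/Λ)·𝒟w + 𝓛w )(τ(t), R), where (𝒟w)(τ,R) = ∂_τw(τ,R) + (Λ'(τ)/Λ(τ))·( R·∂_Rw(τ,R) − w(τ,R) ) and (𝓛w)(τ,R) = −∂_R²w(τ,R) + (α/R²)·w(τ,R) − 5·W_α(R)⁴·w(τ,R). -/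

import Mathlib

noncomputable def betaOf (α : ℝ) : ℝ := Real.sqrt (1 + 4 * α)

/-- The ground state soliton `W_α(R) = (3β²)^(1/4) (R^(β-1)/(1+R^(2β)))^(1/2)`. -/
noncomputable def Walpha (α : ℝ) (R : ℝ) : ℝ :=
  (3 * betaOf α ^ 2) ^ ((1 : ℝ) / 4) *
    (R ^ (betaOf α - 1) / (1 + R ^ (2 * betaOf α))) ^ ((1 : ℝ) / 2)

/-- `λ(t) = t^{-1-ν}`. -/
noncomputable def lamT (ν t : ℝ) : ℝ := t ^ (-(1 + ν))

/-- `τ(t) = ν⁻¹ t^{-ν}`. -/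
noncomputable def tauT (ν t : ℝ) : ℝ := ν⁻¹ * t ^ (-ν)

/-- `Λ(τ) = (ντ)^{1+1/ν}`, so that `Λ(τ(t)) = λ(t)`. -/
noncomputable def LamF (ν τ : ℝ) : ℝ := (ν * τ) ^ (1 + 1 / ν)

/-- The dilated derivative `(𝒟w)(τ,R) = ∂_τ w + (Λ'/Λ)(R ∂_R w - w)`. -/
noncomputable def Dop (ν : ℝ) (w : ℝ → ℝ → ℝ) : ℝ → ℝ → ℝ := fun τ R =>
  deriv (fun σ => w σ R) τ
    + (deriv (LamF ν) τ / LamF ν τ) * (R * deriv (w τ) R - w τ R)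

/-- The linearized operator in the `R` variable:
`(𝓛w)(τ,R) = -∂_R² w + (α/R²) w - 5 W_α(R)⁴ w`. -/
noncomputable def LinOp (α : ℝ) (w : ℝ → ℝ → ℝ) : ℝ → ℝ → ℝ := fun τ R =>
  -(deriv (deriv (w τ)) R) + (α / R ^ 2) * w τ R - 5 * (Walpha α R) ^ 4 * w τ R

/- ### Auxiliary machinery -/

noncomputable def pd1 (w : ℝ → ℝ → ℝ) (p : ℝ × ℝ) : ℝ :=
  fderiv ℝ (Function.uncurry w) p (1, 0)

noncomputable def pd2 (w : ℝ → ℝ → ℝ) (p : ℝ × ℝ) : ℝ :=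
  fderiv ℝ (Function.uncurry w) p (0, 1)

noncomputable def pdH (w : ℝ → ℝ → ℝ) (p : ℝ × ℝ) (v u : ℝ × ℝ) : ℝ :=
  fderiv ℝ (fderiv ℝ (Function.uncurry w)) p v u

lemma clm_eval2 {M : Type*} [NormedAddCommGroup M] [NormedSpace ℝ M]
    (m : ℝ × ℝ →L[ℝ] M) (x y : ℝ) :
    m (x, y) = x • m (1, 0) + y • m (0, 1) := by
  have h : (x, y) = x • ((1:ℝ), (0:ℝ)) + y • ((0:ℝ), (1:ℝ)) := by
    simp [Prod.ext_iff]
  rw [h, map_add, map_smul, map_smul]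

lemma hasDerivAt_uncurry_path (w : ℝ → ℝ → ℝ) (hw : ContDiff ℝ 2 (Function.uncurry w))
    {p : ℝ → ℝ × ℝ} {p1' p2' : ℝ} {s : ℝ} (hp : HasDerivAt p (p1', p2') s) :
    HasDerivAt (fun x => w (p x).1 (p x).2)
      (p1' * pd1 w (p s) + p2' * pd2 w (p s)) s := by
  have h := ((hw.differentiable (by norm_num) (p s)).hasFDerivAt).comp_hasDerivAt s hp
  have e : (fderiv ℝ (Function.uncurry w) (p s)) (p1', p2')
      = p1' * pd1 w (p s) + p2' * pd2 w (p s) := by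
    rw [clm_eval2]; simp [pd1, pd2]
  rw [e] at h
  exact h

lemma hasDerivAt_pd_path (w : ℝ → ℝ → ℝ) (hw : ContDiff ℝ 2 (Function.uncurry w))
    (v : ℝ × ℝ) {p : ℝ → ℝ × ℝ} {p1' p2' : ℝ} {s : ℝ} (hp : HasDerivAt p (p1', p2') s) :
    HasDerivAt (fun x => fderiv ℝ (Function.uncurry w) (p x) v)
      (p1' * pdH w (p s) (1, 0) v + p2' * pdH w (p s) (0, 1) v) s := by
  have hf' : ContDiff ℝ 1 (fderiv ℝ (Function.uncurry w)) :=
    hw.fderiv_right (by norm_num)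
  have h := ((hf'.differentiable one_ne_zero (p s)).hasFDerivAt).comp_hasDerivAt s hp
  have h2 := h.clm_apply (hasDerivAt_const s v)
  simp only [Function.comp_apply] at h2
  have e : (fderiv ℝ (fderiv ℝ (Function.uncurry w)) (p s)) (p1', p2') v
      + (fderiv ℝ (Function.uncurry w) (p s)) 0
      = p1' * pdH w (p s) (1, 0) v + p2' * pdH w (p s) (0, 1) v := by
    rw [map_zero, add_zero,
      clm_eval2 (fderiv ℝ (fderiv ℝ (Function.uncurry w)) (p s)) p1' p2']
    simp [pdH]
  rw [e] at h2
  exact h2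

lemma pdH_symm (w : ℝ → ℝ → ℝ) (hw : ContDiff ℝ 2 (Function.uncurry w))
    (p : ℝ × ℝ) (v u : ℝ × ℝ) : pdH w p v u = pdH w p u v :=
  second_derivative_symmetric
    (fun y => (hw.differentiable (by norm_num) y).hasFDerivAt)
    (((hw.fderiv_right (m := 1) (by norm_num)).differentiable one_ne_zero p).hasFDerivAt) v u

lemma lamT_hasDerivAt (ν : ℝ) {s : ℝ} (hs : 0 < s) :
    HasDerivAt (lamT ν) (-(1 + ν) * s ^ (-(2 + ν))) s := by
  have h := Real.hasDerivAt_rpow_const (x := s) (p := -(1 + ν)) (Or.inl hs.ne')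
  rw [show -(1 + ν) - 1 = -(2 + ν) by ring] at h
  exact h

lemma tauT_hasDerivAt {ν : ℝ} (hν : 0 < ν) {s : ℝ} (hs : 0 < s) :
    HasDerivAt (tauT ν) (-(s ^ (-(ν + 1)))) s := by
  have h := (Real.hasDerivAt_rpow_const (x := s) (p := -ν) (Or.inl hs.ne')).const_mul ν⁻¹
  rw [show -ν - 1 = -(ν + 1) by ring] at h
  have e : ν⁻¹ * (-ν * s ^ (-(ν + 1))) = -(s ^ (-(ν + 1))) := by
    field_simp
  rw [e] at h
  exact h

lemma LamF_hasDerivAt {ν : ℝ} (hν : 0 < ν) {σ : ℝ} (hσ : 0 < σ) :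
    HasDerivAt (LamF ν) ((ν + 1) * (ν * σ) ^ (1 / ν)) σ := by
  have h0 : HasDerivAt (fun x : ℝ => ν * x) ν σ := by
    simpa using (hasDerivAt_id σ).const_mul ν
  have h1 := Real.hasDerivAt_rpow_const (x := ν * σ) (p := 1 + 1 / ν)
    (Or.inl (by positivity))
  have h := h1.comp σ h0
  rw [show 1 + 1 / ν - 1 = 1 / ν by ring] at h
  have e : (1 + 1 / ν) * (ν * σ) ^ (1 / ν) * ν = (ν + 1) * (ν * σ) ^ (1 / ν) := by
    field_simp
  rw [e] at h
  exact h

lemma q_eq {ν : ℝ} (hν : 0 < ν) {σ : ℝ} (hσ : 0 < σ) :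
    deriv (LamF ν) σ / LamF ν σ = (ν + 1) / (ν * σ) := by
  rw [(LamF_hasDerivAt hν hσ).deriv]
  have hL : LamF ν σ = (ν * σ) * (ν * σ) ^ (1 / ν) := by
    rw [LamF, Real.rpow_add (by positivity), Real.rpow_one]
  rw [hL]
  have hP : ((ν * σ : ℝ) ^ (1 / ν : ℝ)) ≠ 0 :=
    (Real.rpow_pos_of_pos (by positivity) _).ne'
  field_simp

set_option maxHeartbeats 4000000 in
/-- The change of variables `(t,r) ↦ (τ,R)` with `ε(t,r) = (λ(t)r)⁻¹ w(τ(t), λ(t)r)`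
converts the perturbed wave operator with time-dependent potential into the dilated
operator `𝒟² + (Λ'/Λ)𝒟 + 𝓛`. -/
theorem change_of_variables_identity
    (α ν : ℝ) (hα : -(1 / 4 : ℝ) < α) (hν : 0 < ν)
    (w : ℝ → ℝ → ℝ) (hw : ContDiff ℝ 2 (Function.uncurry w))
    (eps : ℝ → ℝ → ℝ)
    (heps : ∀ t r : ℝ, eps t r = (lamT ν t * r)⁻¹ * w (tauT ν t) (lamT ν t * r)) :
    ∀ t : ℝ, 0 < t → ∀ r : ℝ, 0 < r → ∀ R : ℝ, R = lamT ν t * r →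
      deriv (deriv (fun s : ℝ => eps s r)) t
        - deriv (deriv (fun s : ℝ => eps t s)) r
        - (2 / r) * deriv (fun s : ℝ => eps t s) r
        + (α / r ^ 2) * eps t r
        - 5 * (lamT ν t) ^ 2 * (Walpha α R) ^ 4 * eps t r
      = (lamT ν t) ^ 2 * R⁻¹ *
          (Dop ν (Dop ν w) (tauT ν t) R
            + (deriv (LamF ν) (tauT ν t) / LamF ν (tauT ν t)) * Dop ν w (tauT ν t) R
            + LinOp α w (tauT ν t) R) := by
  intro t ht r hr R hR
  subst hR
  have hlampos : 0 < lamT ν t := Real.rpow_pos_of_pos ht _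
  have hRpos : 0 < lamT ν t * r := mul_pos hlampos hr
  have hτpos : 0 < tauT ν t :=
    mul_pos (inv_pos.mpr hν) (Real.rpow_pos_of_pos ht _)
  -- pointwise partial derivatives
  have hwt : ∀ σ X : ℝ, HasDerivAt (fun σ' => w σ' X) (pd1 w (σ, X)) σ := by
    intro σ X
    simpa using hasDerivAt_uncurry_path w hw
      ((hasDerivAt_id σ).prodMk (hasDerivAt_const σ X))
  have hwx : ∀ σ X : ℝ, HasDerivAt (w σ) (pd2 w (σ, X)) X := by
    intro σ X
    simpa using hasDerivAt_uncurry_path w hw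
      ((hasDerivAt_const X σ).prodMk (hasDerivAt_id X))
  have hDop : ∀ σ : ℝ, 0 < σ → ∀ X : ℝ,
      Dop ν w σ X
        = pd1 w (σ, X) + (ν + 1) / (ν * σ) * (X * pd2 w (σ, X) - w σ X) := by
    intro σ hσ X
    rw [show Dop ν w σ X = deriv (fun σ' => w σ' X) σ
        + (deriv (LamF ν) σ / LamF ν σ) * (X * deriv (w σ) X - w σ X) from rfl,
      (hwt σ X).deriv, (hwx σ X).deriv, q_eq hν hσ]
  -- ### t-direction
  have T1 : ∀ s : ℝ, 0 < s → HasDerivAt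
      (fun s' : ℝ => (lamT ν s' * r)⁻¹ * w (tauT ν s') (lamT ν s' * r))
      (-(-(1 + ν) * s ^ (-(2 + ν)) * r) / (lamT ν s * r) ^ 2
          * w (tauT ν s) (lamT ν s * r)
        + (lamT ν s * r)⁻¹ *
          (-(s ^ (-(ν + 1))) * pd1 w (tauT ν s, lamT ν s * r)
            + -(1 + ν) * s ^ (-(2 + ν)) * r * pd2 w (tauT ν s, lamT ν s * r))) s := by
    intro s hs
    have hslam : 0 < lamT ν s * r := mul_pos (Real.rpow_pos_of_pos hs _) hr
    have hL : HasDerivAt (fun s' => lamT ν s' * r)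
        (-(1 + ν) * s ^ (-(2 + ν)) * r) s := (lamT_hasDerivAt ν hs).mul_const r
    have hpath : HasDerivAt (fun s' : ℝ => (tauT ν s', lamT ν s' * r))
        (-(s ^ (-(ν + 1))), -(1 + ν) * s ^ (-(2 + ν)) * r) s :=
      (tauT_hasDerivAt hν hs).prodMk hL
    exact (hL.inv hslam.ne').mul (hasDerivAt_uncurry_path w hw hpath)
  have hpath_t : HasDerivAt (fun s' : ℝ => (tauT ν s', lamT ν s' * r))
      (-(t ^ (-(ν + 1))), -(1 + ν) * t ^ (-(2 + ν)) * r) t :=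
    (tauT_hasDerivAt hν ht).prodMk ((lamT_hasDerivAt ν ht).mul_const r)
  have hLt : HasDerivAt (fun s' => lamT ν s' * r)
      (-(1 + ν) * t ^ (-(2 + ν)) * r) t := (lamT_hasDerivAt ν ht).mul_const r
  have hr2 : HasDerivAt (fun s : ℝ => s ^ (-(2 + ν))) (-(2 + ν) * t ^ (-(3 + ν))) t := by
    have h := Real.hasDerivAt_rpow_const (x := t) (p := -(2 + ν)) (Or.inl ht.ne')
    rw [show -(2 + ν) - 1 = -(3 + ν) by ring] at h
    exact h
  have hr1 : HasDerivAt (fun s : ℝ => s ^ (-(ν + 1))) (-(ν + 1) * t ^ (-(ν + 2))) t := by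
    have h := Real.hasDerivAt_rpow_const (x := t) (p := -(ν + 1)) (Or.inl ht.ne')
    rw [show -(ν + 1) - 1 = -(ν + 2) by ring] at h
    exact h
  have hw0' : HasDerivAt (fun s' : ℝ => w (tauT ν s') (lamT ν s' * r))
      (-(t ^ (-(ν + 1))) * pd1 w (tauT ν t, lamT ν t * r)
        + -(1 + ν) * t ^ (-(2 + ν)) * r * pd2 w (tauT ν t, lamT ν t * r)) t :=
    hasDerivAt_uncurry_path w hw hpath_t
  have ha' : HasDerivAt (fun s' : ℝ => pd1 w (tauT ν s', lamT ν s' * r))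
      (-(t ^ (-(ν + 1))) * pdH w (tauT ν t, lamT ν t * r) (1, 0) (1, 0)
        + -(1 + ν) * t ^ (-(2 + ν)) * r * pdH w (tauT ν t, lamT ν t * r) (0, 1) (1, 0)) t :=
    hasDerivAt_pd_path w hw (1, 0) hpath_t
  have hb' : HasDerivAt (fun s' : ℝ => pd2 w (tauT ν s', lamT ν s' * r))
      (-(t ^ (-(ν + 1))) * pdH w (tauT ν t, lamT ν t * r) (1, 0) (0, 1)
        + -(1 + ν) * t ^ (-(2 + ν)) * r * pdH w (tauT ν t, lamT ν t * r) (0, 1) (0, 1)) t :=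
    hasDerivAt_pd_path w hw (0, 1) hpath_t
  have hN : HasDerivAt (fun s : ℝ => -(-(1 + ν) * s ^ (-(2 + ν)) * r))
      (-(-(1 + ν) * (-(2 + ν) * t ^ (-(3 + ν))) * r)) t :=
    ((hr2.const_mul (-(1 + ν))).mul_const r).neg
  have hD2 := hLt.fun_pow 2
  have hc1 := hN.div hD2 (pow_ne_zero 2 hRpos.ne')
  have hc2 := hLt.inv hRpos.ne'
  have hg := ((hr1.neg).mul ha').add
    (((hr2.const_mul (-(1 + ν))).mul_const r).mul hb')
  have total := (hc1.mul hw0').add (hc2.mul hg)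
  have hev1 : (deriv (fun s' : ℝ => (lamT ν s' * r)⁻¹ * w (tauT ν s') (lamT ν s' * r)))
      =ᶠ[nhds t] (fun s : ℝ =>
        -(-(1 + ν) * s ^ (-(2 + ν)) * r) / (lamT ν s * r) ^ 2
          * w (tauT ν s) (lamT ν s * r)
        + (lamT ν s * r)⁻¹ *
          (-(s ^ (-(ν + 1))) * pd1 w (tauT ν s, lamT ν s * r)
            + -(1 + ν) * s ^ (-(2 + ν)) * r * pd2 w (tauT ν s, lamT ν s * r))) := by
    filter_upwards [Ioi_mem_nhds ht] with s hs
    exact (T1 s hs).deriv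
  have hA1 := hev1.deriv_eq.trans total.deriv
  -- ### r-direction
  have hL2 : ∀ x : ℝ, HasDerivAt (fun x' : ℝ => lamT ν t * x') (lamT ν t) x := by
    intro x
    simpa using (hasDerivAt_id x).const_mul (lamT ν t)
  have R1 : ∀ x : ℝ, 0 < x → HasDerivAt
      (fun x' : ℝ => (lamT ν t * x')⁻¹ * w (tauT ν t) (lamT ν t * x'))
      (-(lamT ν t) / (lamT ν t * x) ^ 2 * w (tauT ν t) (lamT ν t * x)
        + (lamT ν t * x)⁻¹ *
          (0 * pd1 w (tauT ν t, lamT ν t * x)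
            + lamT ν t * pd2 w (tauT ν t, lamT ν t * x))) x := by
    intro x hx
    have hpos : 0 < lamT ν t * x := mul_pos hlampos hx
    have hpathr : HasDerivAt (fun x' : ℝ => (tauT ν t, lamT ν t * x'))
        ((0 : ℝ), lamT ν t) x := (hasDerivAt_const x (tauT ν t)).prodMk (hL2 x)
    exact ((hL2 x).inv hpos.ne').mul (hasDerivAt_uncurry_path w hw hpathr)
  have hpathr : HasDerivAt (fun x' : ℝ => (tauT ν t, lamT ν t * x'))
      ((0 : ℝ), lamT ν t) r := (hasDerivAt_const r (tauT ν t)).prodMk (hL2 r)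
  have hw0r : HasDerivAt (fun x' : ℝ => w (tauT ν t) (lamT ν t * x'))
      (0 * pd1 w (tauT ν t, lamT ν t * r)
        + lamT ν t * pd2 w (tauT ν t, lamT ν t * r)) r :=
    hasDerivAt_uncurry_path w hw hpathr
  have har : HasDerivAt (fun x' : ℝ => pd1 w (tauT ν t, lamT ν t * x'))
      (0 * pdH w (tauT ν t, lamT ν t * r) (1, 0) (1, 0)
        + lamT ν t * pdH w (tauT ν t, lamT ν t * r) (0, 1) (1, 0)) r :=
    hasDerivAt_pd_path w hw (1, 0) hpathr
  have hbr : HasDerivAt (fun x' : ℝ => pd2 w (tauT ν t, lamT ν t * x'))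
      (0 * pdH w (tauT ν t, lamT ν t * r) (1, 0) (0, 1)
        + lamT ν t * pdH w (tauT ν t, lamT ν t * r) (0, 1) (0, 1)) r :=
    hasDerivAt_pd_path w hw (0, 1) hpathr
  have hc1r := (hasDerivAt_const r (-(lamT ν t))).div ((hL2 r).fun_pow 2)
    (pow_ne_zero 2 hRpos.ne')
  have hc2r := (hL2 r).inv hRpos.ne'
  have hgr := (har.const_mul 0).add (hbr.const_mul (lamT ν t))
  have totalr := (hc1r.mul hw0r).add (hc2r.mul hgr)
  have hev2 : (deriv (fun x' : ℝ => (lamT ν t * x')⁻¹ * w (tauT ν t) (lamT ν t * x')))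
      =ᶠ[nhds r] (fun x : ℝ =>
        -(lamT ν t) / (lamT ν t * x) ^ 2 * w (tauT ν t) (lamT ν t * x)
        + (lamT ν t * x)⁻¹ *
          (0 * pd1 w (tauT ν t, lamT ν t * x)
            + lamT ν t * pd2 w (tauT ν t, lamT ν t * x))) := by
    filter_upwards [Ioi_mem_nhds hr] with x hx
    exact (R1 x hx).deriv
  have hA2 := hev2.deriv_eq.trans totalr.deriv
  have hA3 := (R1 r hr).deriv
  -- ### RHS pieces
  have hqτ := q_eq hν hτpos
  have haσ : HasDerivAt (fun σ : ℝ => pd1 w (σ, lamT ν t * r))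
      (pdH w (tauT ν t, lamT ν t * r) (1, 0) (1, 0)) (tauT ν t) := by
    simpa [pd1] using hasDerivAt_pd_path w hw (1, 0)
      ((hasDerivAt_id (tauT ν t)).prodMk (hasDerivAt_const (tauT ν t) (lamT ν t * r)))
  have hbσ : HasDerivAt (fun σ : ℝ => pd2 w (σ, lamT ν t * r))
      (pdH w (tauT ν t, lamT ν t * r) (1, 0) (0, 1)) (tauT ν t) := by
    simpa [pd2] using hasDerivAt_pd_path w hw (0, 1)
      ((hasDerivAt_id (tauT ν t)).prodMk (hasDerivAt_const (tauT ν t) (lamT ν t * r)))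
  have hqd := (hasDerivAt_const (tauT ν t) (ν + 1)).div
    ((hasDerivAt_id (tauT ν t)).const_mul ν) (mul_pos hν hτpos).ne'
  have hinner := (hbσ.const_mul (lamT ν t * r)).sub (hwt (tauT ν t) (lamT ν t * r))
  have totalσ := haσ.add (hqd.mul hinner)
  have hev3 : (fun σ : ℝ => Dop ν w σ (lamT ν t * r)) =ᶠ[nhds (tauT ν t)]
      (fun σ : ℝ => pd1 w (σ, lamT ν t * r)
        + (ν + 1) / (ν * σ) *
          ((lamT ν t * r) * pd2 w (σ, lamT ν t * r) - w σ (lamT ν t * r))) := by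
    filter_upwards [Ioi_mem_nhds hτpos] with σ hσ
    exact hDop σ hσ _
  have hterm1 := hev3.deriv_eq.trans totalσ.deriv
  have hfunX : Dop ν w (tauT ν t) = (fun X : ℝ => pd1 w (tauT ν t, X)
      + (ν + 1) / (ν * tauT ν t) * (X * pd2 w (tauT ν t, X) - w (tauT ν t) X)) :=
    funext fun X => hDop (tauT ν t) hτpos X
  have haX : HasDerivAt (fun X : ℝ => pd1 w (tauT ν t, X))
      (pdH w (tauT ν t, lamT ν t * r) (0, 1) (1, 0)) (lamT ν t * r) := by
    simpa [pd1] using hasDerivAt_pd_path w hw (1, 0)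
      ((hasDerivAt_const (lamT ν t * r) (tauT ν t)).prodMk (hasDerivAt_id (lamT ν t * r)))
  have hbX : HasDerivAt (fun X : ℝ => pd2 w (tauT ν t, X))
      (pdH w (tauT ν t, lamT ν t * r) (0, 1) (0, 1)) (lamT ν t * r) := by
    simpa [pd2] using hasDerivAt_pd_path w hw (0, 1)
      ((hasDerivAt_const (lamT ν t * r) (tauT ν t)).prodMk (hasDerivAt_id (lamT ν t * r)))
  have hmulX := (hasDerivAt_id (lamT ν t * r)).mul hbX
  have hinnerX := hmulX.sub (hwx (tauT ν t) (lamT ν t * r))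
  have totalX := haX.add (hinnerX.const_mul ((ν + 1) / (ν * tauT ν t)))
  have hterm2 := (congrArg (fun f => deriv f (lamT ν t * r)) hfunX).trans totalX.deriv
  have hderivwτ : deriv (w (tauT ν t)) = fun X : ℝ => pd2 w (tauT ν t, X) :=
    funext fun X => (hwx (tauT ν t) X).deriv
  have hLinw := (congrArg (fun f => deriv f (lamT ν t * r)) hderivwτ).trans hbX.deriv
  have hDop1 := hDop (tauT ν t) hτpos (lamT ν t * r)
  have hDD : Dop ν (Dop ν w) (tauT ν t) (lamT ν t * r)
      = deriv (fun σ => Dop ν w σ (lamT ν t * r)) (tauT ν t)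
        + (deriv (LamF ν) (tauT ν t) / LamF ν (tauT ν t)) *
          ((lamT ν t * r) * deriv (Dop ν w (tauT ν t)) (lamT ν t * r)
            - Dop ν w (tauT ν t) (lamT ν t * r)) := rfl
  have hLinEq : LinOp α w (tauT ν t) (lamT ν t * r)
      = -(deriv (deriv (w (tauT ν t))) (lamT ν t * r))
        + (α / (lamT ν t * r) ^ 2) * w (tauT ν t) (lamT ν t * r)
        - 5 * (Walpha α (lamT ν t * r)) ^ 4 * w (tauT ν t) (lamT ν t * r) := rfl
  -- ### assemble
  have hfun1 : (fun s : ℝ => eps s r)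
      = (fun s' : ℝ => (lamT ν s' * r)⁻¹ * w (tauT ν s') (lamT ν s' * r)) :=
    funext fun s => heps s r
  have hfun2 : (fun s : ℝ => eps t s)
      = (fun x' : ℝ => (lamT ν t * x')⁻¹ * w (tauT ν t) (lamT ν t * x')) :=
    funext fun s => heps t s
  rw [hfun1, hfun2, heps t r, hA1, hA2, hA3, hDD, hterm1, hterm2, hDop1, hLinEq,
    hLinw, hqτ]
  rw [pdH_symm w hw (tauT ν t, lamT ν t * r) (0, 1) (1, 0)]
  beta_reduce
  simp only [id_eq, lamT, tauT, Pi.div_apply, Pi.sub_apply, Pi.add_apply, Pi.mul_apply,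
    Pi.neg_apply, Pi.pow_apply, Pi.inv_apply]
  have key : ∀ (m : ℕ) (c : ℝ), c = -(m : ℝ) + -ν →
      t ^ c = (t ^ m)⁻¹ * t ^ (-ν) := by
    intro m c hc
    rw [hc, Real.rpow_add ht, Real.rpow_neg ht.le, Real.rpow_natCast]
  rw [key 1 (-(1 + ν)) (by push_cast; ring), key 1 (-(ν + 1)) (by push_cast; ring),
    key 2 (-(2 + ν)) (by push_cast; ring), key 2 (-(ν + 2)) (by push_cast; ring),
    key 3 (-(3 + ν)) (by push_cast; ring)]
  have hX : (0:ℝ) < t ^ (-ν) := Real.rpow_pos_of_pos ht _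
  have ht0 : t ≠ 0 := ht.ne'
  field_simp
  generalize w (t ^ (-ν) / ν) (t ^ (-ν) * r / t) = W
  linear_combination (-2 * r * t ^ 4 + 4 * r ^ 3 * ν * t ^ 2 + 2 * r ^ 3 * ν ^ 2 * t ^ 2
    + 2 * r ^ 3 * t ^ 2) * t ^ (-ν) * W
    * mul_inv_cancel₀ ht0
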